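/- arXiv:1003.4614 — 7 statements merged into one kernel-verified Lean document; each statement's English description precedes it below -/
import Mathlib

section
/- There is no nonempty pure 2-dimensional simplicial complex all of whose vertex links are isomorphic to the graph G₅. Precisely: there is no pair (V, F) where V is a nonempty type and F is a set of 3-element finite subsets of V (the faces), such that for every vertex v ∈ V the link of v is graph-isomorphic to G₅. -/
/-- The graph `G₅` (the simplicial inverse pyramid): vertices `vᵢ = i` for `0 ≤ i ≤ 5`,
`mᵢ = 6 + i` for `0 ≤ i ≤ 5`, `t = 12`, `b = 13`; edges `vᵢ ~ v_{(i+1) % 6}`, `vᵢ ~ mᵢ`,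
`mᵢ ~ t` for `i` even and `mᵢ ~ b` for `i` odd. -/
def G5 : SimpleGraph (Fin 14) :=
  SimpleGraph.fromRel (fun a b => (a, b) ∈
    ([(0, 1), (1, 2), (2, 3), (3, 4), (4, 5), (5, 0),
      (0, 6), (1, 7), (2, 8), (3, 9), (4, 10), (5, 11),
      (6, 12), (8, 12), (10, 12), (7, 13), (9, 13), (11, 13)] : List (Fin 14 × Fin 14)))

/-- The link of a vertex `v` in the simplicial complex with face set `F`: the simple graph on
those vertices `w ≠ v` such that `{v, w}` is contained in some member of `F`, with `w` and `w'`
adjacent if and only if `{v, w, w'} ∈ F`. -/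
def linkGraph {V : Type*} (F : Set (Finset V)) (v : V) :
    SimpleGraph {w : V // w ≠ v ∧ ∃ f ∈ F, v ∈ f ∧ w ∈ f} where
  Adj w w' := w.1 ≠ w'.1 ∧ ∃ f ∈ F, (f : Set V) = {v, w.1, w'.1}
  symm := ⟨by
    rintro w w' ⟨hne, f, hf, hset⟩
    exact ⟨hne.symm, f, hf, by rw [hset, Set.pair_comm]⟩⟩
  loopless := ⟨fun w h => h.1 rfl⟩

lemma G5_adj (a b : Fin 14) : G5.Adj a b ↔ a ≠ b ∧
    ((a, b) ∈ ([(0, 1), (1, 2), (2, 3), (3, 4), (4, 5), (5, 0),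
      (0, 6), (1, 7), (2, 8), (3, 9), (4, 10), (5, 11),
      (6, 12), (8, 12), (10, 12), (7, 13), (9, 13), (11, 13)] : List (Fin 14 × Fin 14)) ∨
     (b, a) ∈ ([(0, 1), (1, 2), (2, 3), (3, 4), (4, 5), (5, 0),
      (0, 6), (1, 7), (2, 8), (3, 9), (4, 10), (5, 11),
      (6, 12), (8, 12), (10, 12), (7, 13), (9, 13), (11, 13)] : List (Fin 14 × Fin 14))) :=
  SimpleGraph.fromRel_adj _ a b

instance G5.adjDecidable : DecidableRel G5.Adj := fun a b =>
  decidable_of_iff' _ (G5_adj a b)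

/-- Vertex-of-link predicate. -/
def IsLinkVert {V : Type} (F : Set (Finset V)) (v w : V) : Prop :=
  w ≠ v ∧ ∃ f ∈ F, v ∈ f ∧ w ∈ f

lemma vertAux {V : Type} {F : Set (Finset V)} {u w : V} {hw : IsLinkVert F u w}
    {x : {y : V // y ≠ u ∧ ∃ f ∈ F, u ∈ f ∧ y ∈ f}}
    (h : (linkGraph F u).Adj ⟨w, hw⟩ x) : IsLinkVert F w x.1 := by
  obtain ⟨hne, f, hf, hset⟩ := h
  refine ⟨fun e => hne e.symm, f, hf, ?_, ?_⟩
  · rw [← Finset.mem_coe, hset]; exact Or.inr (Or.inl rfl)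
  · rw [← Finset.mem_coe, hset]; exact Or.inr (Or.inr rfl)

lemma adjAux {V : Type} {F : Set (Finset V)} {u w : V} {hw : IsLinkVert F u w}
    {x : {y : V // y ≠ u ∧ ∃ f ∈ F, u ∈ f ∧ y ∈ f}}
    (h : (linkGraph F u).Adj ⟨w, hw⟩ x) (hu : IsLinkVert F w u) :
    (linkGraph F w).Adj ⟨u, hu⟩ ⟨x.1, vertAux h⟩ := by
  obtain ⟨hne, f, hf, hset⟩ := h
  exact ⟨fun e => x.2.1 e.symm, f, hf, hset.trans (Set.insert_comm u w {x.1})⟩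

/-- The neighborhood of `w` in the link of `u` is equivalent to the neighborhood of `u`
in the link of `w`. -/
def linkNbhdEquiv {V : Type} (F : Set (Finset V)) (u w : V)
    (hw : IsLinkVert F u w) (hu : IsLinkVert F w u) :
    (linkGraph F u).neighborSet ⟨w, hw⟩ ≃ (linkGraph F w).neighborSet ⟨u, hu⟩ where
  toFun x := ⟨⟨x.1.1, vertAux x.2⟩, adjAux x.2 hu⟩
  invFun x := ⟨⟨x.1.1, vertAux x.2⟩, adjAux x.2 hw⟩
  left_inv x := rfl
  right_inv x := rfl

lemma degree_symm {V : Type} (F : Set (Finset V)) {u w : V}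
    (hw : IsLinkVert F u w) (hu : IsLinkVert F w u)
    (eu : linkGraph F u ≃g G5) (ew : linkGraph F w ≃g G5) :
    G5.degree (eu ⟨w, hw⟩) = G5.degree (ew ⟨u, hu⟩) := by
  rw [← SimpleGraph.card_neighborSet_eq_degree, ← SimpleGraph.card_neighborSet_eq_degree]
  exact Fintype.card_congr ((eu.mapNeighborSet _).symm.trans
    ((linkNbhdEquiv F u w hw hu).trans (ew.mapNeighborSet _)))

lemma G5_deg12 : G5.degree 12 = 3 := by decide

lemma G5_nbhd12 : ∀ b, G5.Adj 12 b → G5.degree b = 2 := by decide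

lemma G5_exists_deg2 : ∀ a, G5.degree a = 3 → ∃ b, G5.Adj a b ∧ G5.degree b = 2 := by decide

lemma G5_deg2_nbhd : ∀ a b, G5.degree a = 2 → G5.Adj a b → G5.degree b = 3 := by decide

/-- There is no nonempty pure 2-dimensional simplicial complex all of whose vertex links are
isomorphic to the inverse pyramid `G₅`. -/
theorem no_complex_with_all_links_G5 :
    ¬ ∃ (V : Type) (_ : Nonempty V) (F : Set (Finset V)),
      (∀ f ∈ F, f.card = 3) ∧ ∀ v : V, Nonempty (linkGraph F v ≃g G5) := by
  rintro ⟨V, ⟨v₀⟩, F, -, hlink⟩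
  obtain ⟨φ⟩ := hlink v₀
  set T := φ.symm 12 with hTdef
  have hT2 : IsLinkVert F v₀ T.1 := T.2
  have hTv : IsLinkVert F T.1 v₀ :=
    ⟨fun e => hT2.1 e.symm, hT2.2.imp fun f hf => ⟨hf.1, hf.2.2, hf.2.1⟩⟩
  have hφT : φ ⟨T.1, hT2⟩ = 12 := by
    have : (⟨T.1, hT2⟩ : {w : V // IsLinkVert F v₀ w}) = T := rfl
    rw [show φ ⟨T.1, hT2⟩ = φ T from rfl, hTdef]
    exact φ.apply_symm_apply 12
  obtain ⟨ψ⟩ := hlink T.1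
  -- degree of v₀ in the link of t is 3
  have ha : G5.degree (ψ ⟨v₀, hTv⟩) = 3 := by
    rw [degree_symm F hTv hT2 ψ φ, hφT]; exact G5_deg12
  obtain ⟨b, hab, hb2⟩ := G5_exists_deg2 _ ha
  set X := ψ.symm b with hXdef
  have hψX : ψ X = b := ψ.apply_symm_apply b
  have hadjX : (linkGraph F T.1).Adj ⟨v₀, hTv⟩ X := by
    rw [← ψ.map_rel_iff, hψX]; exact hab
  have hXv : IsLinkVert F v₀ X.1 := vertAux hadjX
  have hXadjT : (linkGraph F v₀).Adj ⟨T.1, hT2⟩ ⟨X.1, hXv⟩ := adjAux hadjX hT2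
  -- degree of x in the link of v₀ is 2
  have hdXv : G5.degree (φ ⟨X.1, hXv⟩) = 2 := by
    apply G5_nbhd12
    rw [← hφT]
    exact φ.map_rel_iff.mpr hXadjT
  have hvX : IsLinkVert F X.1 v₀ :=
    ⟨fun e => hXv.1 e.symm, hXv.2.imp fun f hf => ⟨hf.1, hf.2.2, hf.2.1⟩⟩
  obtain ⟨χ⟩ := hlink X.1
  -- degree of v₀ in the link of x is 2
  have hdvX : G5.degree (χ ⟨v₀, hvX⟩) = 2 := by
    rw [degree_symm F hvX hXv χ φ]; exact hdXv
  -- t is adjacent to v₀ in the link of x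
  have hTX : IsLinkVert F X.1 T.1 := vertAux ((linkGraph F v₀).adj_symm hXadjT)
  have hadjTX : (linkGraph F X.1).Adj ⟨v₀, hvX⟩ ⟨T.1, hTX⟩ :=
    adjAux ((linkGraph F v₀).adj_symm hXadjT) hvX
  -- hence degree of t in the link of x is 3
  have hdTX : G5.degree (χ ⟨T.1, hTX⟩) = 3 :=
    G5_deg2_nbhd _ _ hdvX (χ.map_rel_iff.mpr hadjTX)
  -- so degree of x in the link of t is 3, contradicting 2
  have hXT : IsLinkVert F T.1 X.1 :=
    ⟨fun e => hTX.1 e.symm, hTX.2.imp fun f hf => ⟨hf.1, hf.2.2, hf.2.1⟩⟩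
  have : G5.degree (ψ ⟨X.1, hXT⟩) = 3 := by
    rw [degree_symm F hXT hTX ψ χ]; exact hdTX
  have hXeq : (⟨X.1, hXT⟩ : {w : V // IsLinkVert F T.1 w}) = X := Subtype.ext rfl
  rw [show ψ ⟨X.1, hXT⟩ = ψ X from rfl, hψX, hb2] at this
  exact absurd this (by norm_num)
end

section
/- The Heawood graph is edge-transitive: for any two edges e and f of the Heawood graph H, there exists a graph automorphism θ of H carrying e to f (i.e., Sym2.map θ e = f). Consequently, up to isomorphism there is exactly one graph obtained from H by deleting a single edge. -/
set_option maxHeartbeats 1000000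


/-- The Heawood graph: the incidence graph of the Fano plane, on vertex set
`ZMod 7 ⊕ ZMod 7`, where point `Sum.inl p` is adjacent to line `Sum.inr ℓ` if and only if
`ℓ - p ∈ {0, 1, 3}`, and no two points and no two lines are adjacent. -/
def Heawood : SimpleGraph (ZMod 7 ⊕ ZMod 7) :=
  SimpleGraph.fromRel (fun a b => ∃ p ℓ : ZMod 7,
    a = Sum.inl p ∧ b = Sum.inr ℓ ∧ ℓ - p ∈ ({0, 1, 3} : Set (ZMod 7)))

/-- A pattern-matching characterization of adjacency in the Heawood graph. -/
def HeawoodAdj' : ZMod 7 ⊕ ZMod 7 → ZMod 7 ⊕ ZMod 7 → Prop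
  | .inl p, .inr ℓ => ℓ - p = 0 ∨ ℓ - p = 1 ∨ ℓ - p = 3
  | .inr ℓ, .inl p => ℓ - p = 0 ∨ ℓ - p = 1 ∨ ℓ - p = 3
  | _, _ => False

instance : DecidableRel HeawoodAdj' := fun a b => by
  rcases a with p | ℓ <;> rcases b with q | m <;> unfold HeawoodAdj' <;> infer_instance

lemma heawood_adj_iff (a b : ZMod 7 ⊕ ZMod 7) : Heawood.Adj a b ↔ HeawoodAdj' a b := by
  rcases a with p | ℓ <;> rcases b with q | m <;>
    simp [Heawood, SimpleGraph.fromRel_adj, HeawoodAdj', Set.mem_insert_iff, or_comm]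

instance : DecidableRel Heawood.Adj := fun a b =>
  decidable_of_iff _ (heawood_adj_iff a b).symm

/-- Affine maps on the Heawood vertex set. -/
def HF (c t p : ZMod 7) : ZMod 7 ⊕ ZMod 7 → ZMod 7 ⊕ ZMod 7
  | .inl x => .inl (c * x + p)
  | .inr y => .inr (c * y + t + p)

/-- Build an automorphism from affine data. -/
def HAut (c t c' t' p : ZMod 7)
    (hl : ∀ q x, HF c' t' (-(c' * q)) (HF c t q x) = x)
    (hr : ∀ q x, HF c t q (HF c' t' (-(c' * q)) x) = x)
    (ha : ∀ q a b, Heawood.Adj (HF c t q a) (HF c t q b) ↔ Heawood.Adj a b) :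
    Heawood ≃g Heawood :=
  ⟨⟨HF c t p, HF c' t' (-(c' * p)), hl p, hr p⟩, @fun a b => ha p a b⟩

lemma hl1 : ∀ q x, HF 1 0 (-(1 * q)) (HF 1 0 q x) = x := by decide
lemma hr1 : ∀ q x, HF 1 0 q (HF 1 0 (-(1 * q)) x) = x := by decide
lemma ha1 : ∀ q a b, Heawood.Adj (HF 1 0 q a) (HF 1 0 q b) ↔ Heawood.Adj a b := by decide
lemma hl2 : ∀ q x, HF 4 3 (-(4 * q)) (HF 2 1 q x) = x := by decide
lemma hr2 : ∀ q x, HF 2 1 q (HF 4 3 (-(4 * q)) x) = x := by decide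
lemma ha2 : ∀ q a b, Heawood.Adj (HF 2 1 q a) (HF 2 1 q b) ↔ Heawood.Adj a b := by decide
lemma hl4 : ∀ q x, HF 2 1 (-(2 * q)) (HF 4 3 q x) = x := by decide
lemma hr4 : ∀ q x, HF 4 3 q (HF 2 1 (-(2 * q)) x) = x := by decide
lemma ha4 : ∀ q a b, Heawood.Adj (HF 4 3 q a) (HF 4 3 q b) ↔ Heawood.Adj a b := by decide

/-- Every edge is the image of the canonical edge under some automorphism. -/
lemma heawood_exists_aut :
    ∀ e ∈ Heawood.edgeSet, ∃ θ : Heawood ≃g Heawood,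
      Sym2.map ⇑θ s(Sum.inl (0 : ZMod 7), Sum.inr (0 : ZMod 7)) = e := by
  have key : ∀ p m : ZMod 7, HeawoodAdj' (Sum.inl p) (Sum.inr m) →
      ∃ θ : Heawood ≃g Heawood,
        Sym2.map ⇑θ s(Sum.inl (0 : ZMod 7), Sum.inr (0 : ZMod 7))
          = s(Sum.inl p, Sum.inr m) := by
    intro p m h
    rcases h with h | h | h <;> rw [sub_eq_iff_eq_add] at h <;> subst h
    · exact ⟨HAut 1 0 1 0 p hl1 hr1 ha1, by simp [HAut, HF, Sym2.map_pair_eq]⟩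
    · exact ⟨HAut 2 1 4 3 p hl2 hr2 ha2, by simp [HAut, HF, Sym2.map_pair_eq]⟩
    · exact ⟨HAut 4 3 2 1 p hl4 hr4 ha4, by simp [HAut, HF, Sym2.map_pair_eq]⟩
  intro e he
  induction e using Sym2.ind with
  | _ a b =>
    rw [SimpleGraph.mem_edgeSet, heawood_adj_iff] at he
    rcases a with p | ℓ <;> rcases b with q | m
    · exact he.elim
    · exact key p m he
    · obtain ⟨θ, hθ⟩ := key q ℓ he
      exact ⟨θ, by rw [hθ, Sym2.eq_swap]⟩
    · exact he.elim


/-- The Heawood graph is edge-transitive: any edge can be carried to any other edge by a graph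
automorphism. Consequently, up to isomorphism there is exactly one graph obtained from the
Heawood graph by deleting a single edge. -/
theorem heawood_edge_transitive :
    (∀ e ∈ Heawood.edgeSet, ∀ f ∈ Heawood.edgeSet,
      ∃ θ : Heawood ≃g Heawood, Sym2.map ⇑θ e = f) ∧
    (∀ e ∈ Heawood.edgeSet, ∀ f ∈ Heawood.edgeSet,
      Nonempty (Heawood.deleteEdges {e} ≃g Heawood.deleteEdges {f})) := by
  have main : ∀ e ∈ Heawood.edgeSet, ∀ f ∈ Heawood.edgeSet,
      ∃ θ : Heawood ≃g Heawood, Sym2.map ⇑θ e = f := by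
    intro e he f hf
    obtain ⟨θe, hθe⟩ := heawood_exists_aut e he
    obtain ⟨θf, hθf⟩ := heawood_exists_aut f hf
    refine ⟨θe.symm.trans θf, ?_⟩
    have h1 : Sym2.map ⇑θe.symm e = s(Sum.inl (0 : ZMod 7), Sum.inr (0 : ZMod 7)) := by
      rw [← hθe, Sym2.map_pair_eq, Sym2.map_pair_eq]
      simp
    have : ⇑(θe.symm.trans θf) = ⇑θf ∘ ⇑θe.symm := rfl
    rw [this, ← Sym2.map_map, h1, hθf]
  refine ⟨main, ?_⟩
  intro e he f hf
  obtain ⟨θ, hθ⟩ := main e he f hf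
  refine ⟨⟨θ.toEquiv, ?_⟩⟩
  intro a b
  simp only [SimpleGraph.deleteEdges_adj, Set.mem_singleton_iff]
  have hmem : s(θ.toEquiv a, θ.toEquiv b) = f ↔ s(a, b) = e := by
    rw [← hθ]
    constructor
    · intro h
      exact Sym2.map.injective θ.injective (by rw [Sym2.map_pair_eq]; exact h)
    · intro h
      rw [← h, Sym2.map_pair_eq]; rfl
  rw [hmem]
  simp [θ.map_rel_iff]
end

section
/- The graph G₅ has exactly 60 roots, every root α of G₅ satisfies q_α = 2 and N(α) = 1 (so rk(α) = 3/2), and consequently the rank of G₅ equals 3/2. -/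
/-- A root of a graph `L`: a path (injective walk) with exactly 3 edges whose initial vertex
has degree at least 3 (degree = number of neighbors). -/
def RootT {V : Type*} (L : SimpleGraph V) : Type _ :=
  {p : Σ u w : V, L.Walk u w //
    p.2.2.IsPath ∧ p.2.2.length = 3 ∧ 3 ≤ Nat.card (L.neighborSet p.1)}

/-- The initial vertex of a root. -/
def rootStart {V : Type*} {L : SimpleGraph V} (α : RootT L) : V := α.1.1

/-- The terminal vertex of a root. -/
def rootEnd {V : Type*} {L : SimpleGraph V} (α : RootT L) : V := α.1.2.1

/-- `q_α`: the degree of the initial vertex of the root `α`, minus one. -/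
noncomputable def rootQ {V : Type*} {L : SimpleGraph V} (α : RootT L) : ℕ :=
  Nat.card (L.neighborSet (rootStart α)) - 1

/-- `N(α)`: the number of roots `β` distinct from `α` having the same initial and the same
terminal vertex as `α`. -/
noncomputable def rootN {V : Type*} {L : SimpleGraph V} (α : RootT L) : ℕ :=
  Nat.card {β : RootT L // β ≠ α ∧ rootStart β = rootStart α ∧ rootEnd β = rootEnd α}

/-- The rank of a root: `rk(α) = 1 + N(α) / q_α ∈ ℚ`. -/
noncomputable def rootRank {V : Type*} {L : SimpleGraph V} (α : RootT L) : ℚ :=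
  1 + (rootN α : ℚ) / (rootQ α : ℚ)

/-- The rank of a graph: the average of the ranks of its roots. -/
noncomputable def graphRank {V : Type*} (L : SimpleGraph V) : ℚ :=
  (∑ᶠ α : RootT L, rootRank α) / (Nat.card (RootT L) : ℚ)

section Aux

open SimpleGraph

instance decAdjG5 : DecidableRel G5.Adj := fun a b =>
  decidable_of_iff (a ≠ b ∧ ((a, b) ∈
    ([(0, 1), (1, 2), (2, 3), (3, 4), (4, 5), (5, 0),
      (0, 6), (1, 7), (2, 8), (3, 9), (4, 10), (5, 11),
      (6, 12), (8, 12), (10, 12), (7, 13), (9, 13), (11, 13)] : List (Fin 14 × Fin 14)) ∨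
      (b, a) ∈
    ([(0, 1), (1, 2), (2, 3), (3, 4), (4, 5), (5, 0),
      (0, 6), (1, 7), (2, 8), (3, 9), (4, 10), (5, 11),
      (6, 12), (8, 12), (10, 12), (7, 13), (9, 13), (11, 13)] : List (Fin 14 × Fin 14)))) Iff.rfl

lemma natCard_nbhd (a : Fin 14) : Nat.card (G5.neighborSet a) = G5.degree a := by
  rw [Nat.card_eq_fintype_card]
  exact G5.card_neighborSet_eq_degree a

/-- The path predicate on quadruples of vertices. -/
def P (a b c d : Fin 14) : Prop :=
  G5.Adj a b ∧ G5.Adj b c ∧ G5.Adj c d ∧ a ≠ c ∧ a ≠ d ∧ b ≠ d ∧ 3 ≤ G5.degree a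

instance decP : ∀ a b c d, Decidable (P a b c d) := fun _ _ _ _ =>
  inferInstanceAs (Decidable (_ ∧ _))

def masksG5 : List Nat := [98, 133, 266, 532, 1064, 2065, 4097, 8194, 4100, 8200, 4112, 8224, 1344, 2688]
def adjB (a b : Fin 14) : Bool := (masksG5.getD a.val 0).testBit b.val
def startOk (a : Fin 14) : Bool := Nat.testBit 12351 a.val
def Pb (a b c d : Fin 14) : Bool :=
  adjB a b && adjB b c && adjB c d && !(a == c) && !(a == d) && !(b == d) && startOk a

lemma adj_iff : ∀ a b : Fin 14, G5.Adj a b ↔ adjB a b = true := by decide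

lemma start_iff : ∀ a : Fin 14, 3 ≤ G5.degree a ↔ startOk a = true := by decide

lemma deg_eq_three : ∀ a : Fin 14, 3 ≤ G5.degree a → G5.degree a = 3 := by decide

lemma P_iff (a b c d : Fin 14) : P a b c d ↔ Pb a b c d = true := by
  simp only [P, Pb, adj_iff, start_iff, Bool.and_eq_true, Bool.not_eq_true',
    beq_eq_false_iff_ne, ne_eq]
  tauto

/-- concrete root type -/
def T : Type := {q : Fin 14 × Fin 14 × Fin 14 × Fin 14 // P q.1 q.2.1 q.2.2.1 q.2.2.2}

instance : Fintype T := inferInstanceAs (Fintype {q : _ × _ × _ × _ // _})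

def ofT : T → RootT G5 := fun s =>
  ⟨⟨s.1.1, s.1.2.2.2, .cons s.2.1 (.cons s.2.2.1 (.cons s.2.2.2.1 .nil))⟩, by
    obtain ⟨⟨a, b, c, d⟩, h1, h2, h3, h4, h5, h6, h7⟩ := s
    refine ⟨?_, rfl, ?_⟩
    · simp only [SimpleGraph.Walk.isPath_def, SimpleGraph.Walk.support_cons,
        SimpleGraph.Walk.support_nil, List.nodup_cons, List.mem_cons, List.mem_singleton,
        List.not_mem_nil, List.nodup_nil, and_true, not_or, List.mem_nil_iff, not_false_iff]
      exact ⟨⟨h1.ne, h4, h5⟩, ⟨h2.ne, h6⟩, h3.ne⟩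
    · rw [natCard_nbhd]; exact h7⟩

lemma walk3 {V : Type*} {G : SimpleGraph V} {u w : V} (p : G.Walk u w) (h : p.length = 3) :
    ∃ (b c : V) (h1 : G.Adj u b) (h2 : G.Adj b c) (h3 : G.Adj c w),
      p = .cons h1 (.cons h2 (.cons h3 .nil)) := by
  cases p with
  | nil => simp at h
  | cons h1 q =>
    cases q with
    | nil => simp at h
    | cons h2 r =>
      cases r with
      | nil => simp at h
      | cons h3 s =>
        cases s with
        | nil => exact ⟨_, _, h1, h2, h3, rfl⟩
        | cons h4 t => simp [SimpleGraph.Walk.length_cons] at h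

lemma ofT_bij : Function.Bijective ofT := by
  constructor
  · rintro ⟨⟨a, b, c, d⟩, hs⟩ ⟨⟨a', b', c', d'⟩, ht⟩ h
    have ha : a = a' := congrArg rootStart h
    have hd : d = d' := congrArg rootEnd h
    have hb : b = b' := congrArg (fun r : RootT G5 => r.1.2.2.getVert 1) h
    have hc : c = c' := congrArg (fun r : RootT G5 => r.1.2.2.getVert 2) h
    subst ha; subst hb; subst hc; subst hd
    rfl
  · rintro ⟨⟨u, w, p⟩, hp, hl, hd⟩
    obtain ⟨b, c, h1, h2, h3, rfl⟩ := walk3 p hl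
    have hnd := hp.support_nodup
    simp only [SimpleGraph.Walk.support_cons, SimpleGraph.Walk.support_nil, List.nodup_cons,
      List.mem_cons, List.mem_singleton, List.not_mem_nil, not_or, List.nodup_nil] at hnd
    exact ⟨⟨(u, b, c, w), h1, h2, h3, by tauto, by tauto, by tauto,
      by rw [← natCard_nbhd]; exact hd⟩, rfl⟩

noncomputable def eT : T ≃ RootT G5 := Equiv.ofBijective ofT ofT_bij

set_option maxRecDepth 100000 in
set_option maxHeartbeats 4000000 in
lemma countB : ∀ a d : Fin 14,
    ((Finset.univ : Finset (Fin 14 × Fin 14)).filter fun bc => Pb a bc.1 bc.2 d = true).card = 0 ∨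
    ((Finset.univ : Finset (Fin 14 × Fin 14)).filter fun bc => Pb a bc.1 bc.2 d = true).card = 2 := by
  decide

def cList : List ℕ := [8, 8, 8, 8, 8, 8, 0, 0, 0, 0, 0, 0, 6, 6]

set_option maxRecDepth 100000 in
set_option maxHeartbeats 4000000 in
lemma countA : ∀ a : Fin 14,
    ((Finset.univ : Finset (Fin 14 × Fin 14 × Fin 14)).filter
      fun r => Pb a r.1 r.2.1 r.2.2 = true).card = cList.getD a.val 0 := by
  decide

def e4 : {q : Fin 14 × Fin 14 × Fin 14 × Fin 14 // P q.1 q.2.1 q.2.2.1 q.2.2.2} ≃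
    {q : Fin 14 × Fin 14 × Fin 14 × Fin 14 // Pb q.1 q.2.1 q.2.2.1 q.2.2.2 = true} :=
  Equiv.subtypeEquivRight (fun q => P_iff q.1 q.2.1 q.2.2.1 q.2.2.2)

def e5 : {q : Fin 14 × Fin 14 × Fin 14 × Fin 14 // Pb q.1 q.2.1 q.2.2.1 q.2.2.2 = true} ≃
    Σ a : Fin 14, {r : Fin 14 × Fin 14 × Fin 14 // Pb a r.1 r.2.1 r.2.2 = true} :=
  Equiv.subtypeProdEquivSigmaSubtype (fun a (r : Fin 14 × Fin 14 × Fin 14) =>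
    Pb a r.1 r.2.1 r.2.2 = true)

lemma card_T : Nat.card T = 60 := by
  unfold T
  rw [Nat.card_congr (e4.trans e5), Nat.card_eq_fintype_card, Fintype.card_sigma]
  have h : ∀ a : Fin 14, Fintype.card {r : Fin 14 × Fin 14 × Fin 14 // Pb a r.1 r.2.1 r.2.2 = true}
      = cList.getD a.val 0 := by
    intro a
    rw [Fintype.card_subtype]
    exact countA a
  rw [Finset.sum_congr rfl (fun a _ => h a)]
  decide

lemma F_card {a b c d : Fin 14} (h : P a b c d) :
    ((Finset.univ : Finset (Fin 14 × Fin 14)).filter fun bc => P a bc.1 bc.2 d).card = 2 := by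
  have he : ((Finset.univ : Finset (Fin 14 × Fin 14)).filter fun bc => P a bc.1 bc.2 d)
      = ((Finset.univ : Finset (Fin 14 × Fin 14)).filter fun bc => Pb a bc.1 bc.2 d = true) := by
    apply Finset.filter_congr
    intro x _
    exact P_iff a x.1 x.2 d
  rw [he]
  rcases countB a d with h0 | h2
  · exfalso
    have hmem : (b, c) ∈ ((Finset.univ : Finset (Fin 14 × Fin 14)).filter
        fun bc => Pb a bc.1 bc.2 d = true) := by
      simp only [Finset.mem_filter, Finset.mem_univ, true_and]
      exact (P_iff a b c d).mp h
    rw [Finset.card_eq_zero] at h0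
    simp [h0] at hmem
  · exact h2

end Aux

/-- `G₅` has exactly 60 roots, every root `α` satisfies `q_α = 2`, `N(α) = 1` and
`rk(α) = 3/2`, and consequently `rk(G₅) = 3/2`. -/
theorem rank_G5 :
    Nat.card (RootT G5) = 60 ∧
    (∀ α : RootT G5, rootQ α = 2 ∧ rootN α = 1 ∧ rootRank α = 3 / 2) ∧
    graphRank G5 = 3 / 2 := by
  have cardRoot : Nat.card (RootT G5) = 60 := by
    rw [← Nat.card_congr eT]; exact card_T
  have hQ : ∀ α : RootT G5, rootQ α = 2 := by
    intro α
    have h3 : 3 ≤ G5.degree (rootStart α) := by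
      rw [← natCard_nbhd]; exact α.2.2.2
    unfold rootQ
    rw [natCard_nbhd, deg_eq_three _ h3]
  have hN : ∀ α : RootT G5, rootN α = 1 := by
    intro α
    obtain ⟨s, rfl⟩ := ofT_bij.2 α
    obtain ⟨⟨a, b, c, d⟩, hs⟩ := s
    set s : T := ⟨(a, b, c, d), hs⟩ with hsdef
    have e1 : {t : T // t ≠ s ∧ t.1.1 = a ∧ t.1.2.2.2 = d} ≃
        {β : RootT G5 // β ≠ ofT s ∧ rootStart β = rootStart (ofT s) ∧
          rootEnd β = rootEnd (ofT s)} := by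
      refine Equiv.subtypeEquiv eT (fun t => ?_)
      show (t ≠ s ∧ t.1.1 = a ∧ t.1.2.2.2 = d) ↔
        (ofT t ≠ ofT s ∧ rootStart (ofT t) = rootStart (ofT s) ∧
          rootEnd (ofT t) = rootEnd (ofT s))
      exact and_congr (ofT_bij.1.ne_iff).symm Iff.rfl
    have e2 : {bc : Fin 14 × Fin 14 // P a bc.1 bc.2 d ∧ bc ≠ (b, c)} ≃
        {t : T // t ≠ s ∧ t.1.1 = a ∧ t.1.2.2.2 = d} :=
      { toFun := fun x => ⟨⟨(a, x.1.1, x.1.2, d), x.2.1⟩, by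
          obtain ⟨⟨b', c'⟩, hP, hne⟩ := x
          refine ⟨?_, rfl, rfl⟩
          intro h
          apply hne
          have h' := congrArg (fun t : T => (t.1.2.1, t.1.2.2.1)) h
          exact h'⟩
        invFun := fun t => ⟨(t.1.1.2.1, t.1.1.2.2.1), by
          obtain ⟨⟨⟨a', b', c', d'⟩, hP⟩, hne, ha, hd⟩ := t
          dsimp only at ha hd ⊢
          subst ha; subst hd
          refine ⟨hP, ?_⟩
          intro h
          apply hne
          have hb : b' = b := congrArg Prod.fst h
          have hc : c' = c := congrArg Prod.snd h
          subst hb; subst hc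
          rfl⟩
        left_inv := by rintro ⟨⟨b', c'⟩, hP, hne⟩; rfl
        right_inv := by
          rintro ⟨⟨⟨a', b', c', d'⟩, hP⟩, hne, ha, hd⟩
          dsimp only at ha hd
          subst ha; subst hd
          rfl }
    unfold rootN
    rw [← Nat.card_congr (e2.trans e1), Nat.card_eq_fintype_card,
      Fintype.card_subtype]
    have hfil : (Finset.univ.filter fun bc : Fin 14 × Fin 14 => P a bc.1 bc.2 d ∧ bc ≠ (b, c))
        = (Finset.univ.filter fun bc : Fin 14 × Fin 14 => P a bc.1 bc.2 d).erase (b, c) := by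
      ext x
      simp only [Finset.mem_filter, Finset.mem_univ, true_and, Finset.mem_erase]
      tauto
    have hmem : (b, c) ∈ (Finset.univ.filter fun bc : Fin 14 × Fin 14 => P a bc.1 bc.2 d) := by
      simp only [Finset.mem_filter, Finset.mem_univ, true_and]
      exact hs
    rw [hfil, Finset.card_erase_of_mem hmem, F_card hs]
  have hR : ∀ α : RootT G5, rootRank α = 3 / 2 := by
    intro α
    unfold rootRank
    rw [hQ, hN]
    norm_num
  refine ⟨cardRoot, fun α => ⟨hQ α, hN α, hR α⟩, ?_⟩
  haveI : Fintype (RootT G5) := Fintype.ofEquiv T eT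
  unfold graphRank
  rw [finsum_eq_sum_of_fintype, Finset.sum_congr rfl (fun α _ => hR α),
    Finset.sum_const, Finset.card_univ, ← Nat.card_eq_fintype_card, cardRoot]
  norm_num
end

section
/- In a simple graph of girth at least 6, for any vertices u and w, the number of paths with exactly 3 edges from u to w is at most the degree of u. (Equivalently, in the paper's notation, every root α satisfies N(α) ≤ q_α.) -/
open SimpleGraph

lemma walk_length3_decomp {V : Type*} {G : SimpleGraph V} {u w : V} (p : G.Walk u w)
    (h : p.length = 3) : ∃ (a b : V) (h1 : G.Adj u a) (h2 : G.Adj a b) (h3 : G.Adj b w),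
      p = SimpleGraph.Walk.cons h1 (SimpleGraph.Walk.cons h2 (SimpleGraph.Walk.cons h3 SimpleGraph.Walk.nil)) := by
  cases p with
  | nil => simp at h
  | cons h1 p =>
    cases p with
    | nil => simp at h
    | cons h2 p =>
      cases p with
      | nil => simp at h
      | cons h3 p =>
        cases p with
        | nil => exact ⟨_, _, h1, h2, h3, rfl⟩
        | cons h4 p => simp [SimpleGraph.Walk.length_cons] at h

lemma cycle_len_ge {V : Type*} {G : SimpleGraph V} (hg : 6 ≤ G.girth) {a : V}
    (c : G.Walk a a) (hc : c.IsCycle) : 6 ≤ c.length := by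
  have h1 : G.egirth ≤ c.length :=
    iInf_le_of_le a (iInf_le_of_le c (iInf_le _ hc))
  have := ENat.toNat_le_toNat h1 (by simp)
  simpa using le_trans hg this

/-- In a finite simple graph of girth at least 6, for any vertices `u` and `w`, the number of
paths with exactly 3 edges from `u` to `w` is at most the degree (number of neighbors) of `u`.
(In the paper's notation: every root `α` satisfies `N(α) ≤ q_α`.) -/
theorem card_three_paths_le_degree {V : Type*} [Fintype V] (G : SimpleGraph V)
    (hg : 6 ≤ G.girth) (u w : V) :
    Nat.card {p : G.Walk u w // p.IsPath ∧ p.length = 3} ≤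
      Nat.card (G.neighborSet u) := by
  classical
  have key : ∀ p : {p : G.Walk u w // p.IsPath ∧ p.length = 3}, G.Adj u (p.1.getVert 1) := by
    rintro ⟨p, hp, hl⟩
    have := p.adj_getVert_succ (i := 0) (by omega)
    simpa using this
  apply Nat.card_le_card_of_injective (fun p => ⟨p.1.getVert 1, key p⟩)
  rintro ⟨p, hp, hpl⟩ ⟨q, hq, hql⟩ hfe
  obtain ⟨a, b, h1, h2, h3, rfl⟩ := walk_length3_decomp p hpl
  obtain ⟨a', b', h1', h2', h3', rfl⟩ := walk_length3_decomp q hql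
  simp only [Subtype.mk.injEq, SimpleGraph.Walk.getVert_cons_succ] at hfe ⊢
  have ha : a = a' := by simpa [SimpleGraph.Walk.getVert] using hfe
  subst ha
  -- distinctness from paths
  have hps := hp.support_nodup
  have hqs := hq.support_nodup
  simp [SimpleGraph.Walk.support_cons, List.nodup_cons] at hps hqs
  by_cases hbb : b = b'
  · subst hbb; rfl
  · exfalso
    -- build a 4-cycle b - a - b' - w - b
    set c : G.Walk b b :=
      SimpleGraph.Walk.cons h2.symm (SimpleGraph.Walk.cons h2'
        (SimpleGraph.Walk.cons h3' (SimpleGraph.Walk.cons h3.symm SimpleGraph.Walk.nil)))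
    have hc : c.IsCycle := by
      rw [SimpleGraph.Walk.isCycle_def]
      obtain ⟨⟨hua, hub, huw⟩, ⟨hab, haw⟩, hbw⟩ := hps
      obtain ⟨⟨hua', hub', huw'⟩, ⟨hab', haw'⟩, hbw'⟩ := hqs
      refine ⟨⟨?_⟩, by simp [c], ?_⟩
      · simp [c, SimpleGraph.Walk.edges_cons, Sym2.eq, Sym2.rel_iff]
        tauto
      · simp [c, SimpleGraph.Walk.support_cons, List.nodup_cons]
        tauto
    have := cycle_len_ge hg c hc
    simp [c] at this
end

section
/- The abelianization of the group Γ₆¹ = ⟨u, v, w | u² w = v w v, w = v⁻¹ u w⁻¹ u v⟩ is isomorphic to ℤ × ℤ/2ℤ × ℤ/2ℤ. -/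
/-- The relator `u² w v⁻¹ w⁻¹ v⁻¹` (i.e. the relation `u² w = v w v`) in the free group on
generators `u = of 0`, `v = of 1`, `w = of 2`. -/
def rel61a : FreeGroup (Fin 3) :=
  (FreeGroup.of 0) ^ 2 * (FreeGroup.of 2) * (FreeGroup.of 1)⁻¹ * (FreeGroup.of 2)⁻¹ *
    (FreeGroup.of 1)⁻¹

/-- The relator `v⁻¹ u w⁻¹ u v w⁻¹` (i.e. the relation `w = v⁻¹ u w⁻¹ u v`) in the free group
on generators `u = of 0`, `v = of 1`, `w = of 2`. -/
def rel61b : FreeGroup (Fin 3) :=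
  (FreeGroup.of 1)⁻¹ * (FreeGroup.of 0) * (FreeGroup.of 2)⁻¹ * (FreeGroup.of 0) *
    (FreeGroup.of 1) * (FreeGroup.of 2)⁻¹

/-- The group `Γ₆¹ = ⟨u, v, w ∣ u² w = v w v, w = v⁻¹ u w⁻¹ u v⟩`. -/
def Gamma61 := PresentedGroup ({rel61a, rel61b} : Set (FreeGroup (Fin 3)))

instance : Group Gamma61 := by unfold Gamma61; infer_instance

namespace G61Aux
open Multiplicative

abbrev G := Multiplicative ℤ × Multiplicative (ZMod 2) × Multiplicative (ZMod 2)

def fgen : Fin 3 → G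
  | 0 => (ofAdd 1, 1, 1)
  | 1 => (ofAdd 1, ofAdd 1, 1)
  | 2 => (ofAdd 1, 1, ofAdd 1)

lemma relskilled : ∀ r ∈ ({rel61a, rel61b} : Set (FreeGroup (Fin 3))),
    FreeGroup.lift fgen r = 1 := by
  rintro r (rfl | rfl) <;>
    simp [rel61a, rel61b, fgen, Prod.ext_iff] <;> decide

def φ : Gamma61 →* G := PresentedGroup.toGroup relskilled

def φ' : Abelianization Gamma61 →* G := Abelianization.lift φ

def U : Abelianization Gamma61 := Abelianization.of (PresentedGroup.of 0)
def V : Abelianization Gamma61 := Abelianization.of (PresentedGroup.of 1)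
def W : Abelianization Gamma61 := Abelianization.of (PresentedGroup.of 2)

lemma mk_rel_eq_one {r : FreeGroup (Fin 3)}
    (h : r ∈ ({rel61a, rel61b} : Set (FreeGroup (Fin 3)))) :
    PresentedGroup.mk _ r = (1 : Gamma61) :=
  (QuotientGroup.eq_one_iff _).mpr (Subgroup.subset_normalClosure h)

lemma relA : U ^ 2 * W * V⁻¹ * W⁻¹ * V⁻¹ = 1 := by
  have h := congrArg Abelianization.of (mk_rel_eq_one (Or.inl rfl))
  have h2 : (Abelianization.of (PresentedGroup.mk _ ((FreeGroup.of 0) ^ 2 * (FreeGroup.of 2) *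
      (FreeGroup.of 1)⁻¹ * (FreeGroup.of 2)⁻¹ * (FreeGroup.of 1)⁻¹)) : Abelianization Gamma61)
      = Abelianization.of 1 := h
  exact h2.trans (map_one _)

lemma relB : V⁻¹ * U * W⁻¹ * U * V * W⁻¹ = 1 := by
  have h := congrArg Abelianization.of (mk_rel_eq_one (Or.inr rfl))
  have h2 : (Abelianization.of (PresentedGroup.mk _ ((FreeGroup.of 1)⁻¹ * (FreeGroup.of 0) *
      (FreeGroup.of 2)⁻¹ * (FreeGroup.of 0) * (FreeGroup.of 1) * (FreeGroup.of 2)⁻¹)) :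
      Abelianization Gamma61) = Abelianization.of 1 := h
  exact h2.trans (map_one _)

lemma addify {x : Abelianization Gamma61} (h : x = 1) :
    Additive.ofMul x = (0 : Additive (Abelianization Gamma61)) := by
  rw [h]; rfl

lemma relA' : (2 : ℤ) • Additive.ofMul U + Additive.ofMul W - Additive.ofMul V
    - Additive.ofMul W - Additive.ofMul V = 0 := by
  have := addify relA
  simpa [ofMul_mul, ofMul_inv, ofMul_pow, sub_eq_add_neg, two_smul, two_zsmul] using this

lemma key1 : (2 : ℤ) • Additive.ofMul (V * U⁻¹) = 0 := by
  have h := relA'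
  rw [ofMul_mul, ofMul_inv]
  have : (2:ℤ) • (Additive.ofMul V + -Additive.ofMul U) =
      -((2 : ℤ) • Additive.ofMul U + Additive.ofMul W - Additive.ofMul V
        - Additive.ofMul W - Additive.ofMul V) := by abel
  rw [this, h, neg_zero]

lemma relB' : -Additive.ofMul V + Additive.ofMul U - Additive.ofMul W + Additive.ofMul U
    + Additive.ofMul V - Additive.ofMul W = 0 := by
  have := addify relB
  simpa [ofMul_mul, ofMul_inv, sub_eq_add_neg] using this

lemma key2 : (2 : ℤ) • Additive.ofMul (W * U⁻¹) = 0 := by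
  have h := relB'
  rw [ofMul_mul, ofMul_inv]
  have : (2:ℤ) • (Additive.ofMul W + -Additive.ofMul U) =
      -(-Additive.ofMul V + Additive.ofMul U - Additive.ofMul W + Additive.ofMul U
        + Additive.ofMul V - Additive.ofMul W) := by abel
  rw [this, h, neg_zero]

def ψ₂ : Multiplicative (ZMod 2) →* Abelianization Gamma61 :=
  AddMonoidHom.toMultiplicativeLeft
    (ZMod.lift 2 ⟨zmultiplesHom _ (Additive.ofMul (V * U⁻¹)), by simpa using key1⟩)

def ψ₃ : Multiplicative (ZMod 2) →* Abelianization Gamma61 :=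
  AddMonoidHom.toMultiplicativeLeft
    (ZMod.lift 2 ⟨zmultiplesHom _ (Additive.ofMul (W * U⁻¹)), by simpa using key2⟩)

def ψ : G →* Abelianization Gamma61 :=
  (zpowersHom _ U).coprod (ψ₂.coprod ψ₃)

lemma lift_apply_one {A : Type*} [AddCommGroup A] (x : A) (h) :
    (ZMod.lift 2 ⟨zmultiplesHom A x, h⟩) 1 = x := by
  have h1 : ((1 : ℤ) : ZMod 2) = 1 := by decide
  rw [← h1, ZMod.lift_coe]
  simp

lemma ψ₂_one : ψ₂ (ofAdd 1) = V * U⁻¹ := by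
  show Additive.toMul ((ZMod.lift 2
    ⟨zmultiplesHom _ (Additive.ofMul (V * U⁻¹)), by simpa using key1⟩) (1 : ZMod 2)) = V * U⁻¹
  rw [lift_apply_one]
  rfl

lemma ψ₃_one : ψ₃ (ofAdd 1) = W * U⁻¹ := by
  show Additive.toMul ((ZMod.lift 2
    ⟨zmultiplesHom _ (Additive.ofMul (W * U⁻¹)), by simpa using key2⟩) (1 : ZMod 2)) = W * U⁻¹
  rw [lift_apply_one]
  rfl

lemma φ'_of (i : Fin 3) : φ' (Abelianization.of (PresentedGroup.of i)) = fgen i := by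
  show φ (PresentedGroup.of i) = fgen i
  exact PresentedGroup.toGroup.of relskilled

lemma ψ_apply (x : Multiplicative ℤ) (y z : Multiplicative (ZMod 2)) :
    ψ (x, y, z) = U ^ toAdd x * (ψ₂ y * ψ₃ z) := rfl

lemma comp1 : ψ.comp φ' = MonoidHom.id _ := by
  apply Abelianization.hom_ext
  apply PresentedGroup.ext
  intro x
  fin_cases x
  · show ψ (φ' (Abelianization.of (PresentedGroup.of 0))) = Abelianization.of (PresentedGroup.of 0)
    rw [φ'_of, show fgen 0 = (ofAdd 1, 1, 1) from rfl, ψ_apply]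
    simp [U]
    rfl
  · show ψ (φ' (Abelianization.of (PresentedGroup.of 1))) = Abelianization.of (PresentedGroup.of 1)
    rw [φ'_of, show fgen 1 = (ofAdd 1, ofAdd 1, 1) from rfl, ψ_apply, ψ₂_one]
    simp only [toAdd_ofAdd, zpow_one, map_one, mul_one]
    rw [mul_comm, inv_mul_cancel_right]
    rfl
  · show ψ (φ' (Abelianization.of (PresentedGroup.of 2))) = Abelianization.of (PresentedGroup.of 2)
    rw [φ'_of, show fgen 2 = (ofAdd 1, 1, ofAdd 1) from rfl, ψ_apply, ψ₃_one]
    simp only [toAdd_ofAdd, zpow_one, map_one, one_mul]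
    rw [mul_comm, inv_mul_cancel_right]
    rfl

lemma zmodcases : ∀ x : ZMod 2, x = 0 ∨ x = 1 := by decide

lemma φψ₂ (b : ZMod 2) : φ' (ψ₂ (ofAdd b)) = (1, ofAdd b, 1) := by
  rcases zmodcases b with rfl | rfl
  · simp [Prod.ext_iff]
  · rw [ψ₂_one, map_mul, map_inv, show φ' U = fgen 0 from φ'_of 0,
      show φ' V = fgen 1 from φ'_of 1]
    simp [fgen, Prod.ext_iff]

lemma φψ₃ (c : ZMod 2) : φ' (ψ₃ (ofAdd c)) = (1, 1, ofAdd c) := by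
  rcases zmodcases c with rfl | rfl
  · simp [Prod.ext_iff]
  · rw [ψ₃_one, map_mul, map_inv, show φ' U = fgen 0 from φ'_of 0,
      show φ' W = fgen 2 from φ'_of 2]
    simp [fgen, Prod.ext_iff]

lemma comp2 : φ'.comp ψ = MonoidHom.id _ := by
  apply MonoidHom.ext
  rintro ⟨a, b, c⟩
  show φ' (ψ (a, b, c)) = (a, b, c)
  rw [ψ_apply, map_mul, map_zpow, map_mul, show φ' U = fgen 0 from φ'_of 0,
    show b = ofAdd (toAdd b) from rfl, show c = ofAdd (toAdd c) from rfl, φψ₂, φψ₃]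
  refine Prod.ext ?_ (Prod.ext ?_ ?_) <;>
    simp [fgen, ← ofAdd_zsmul]

end G61Aux

/-- The abelianization of `Γ₆¹` is isomorphic to `ℤ × ℤ/2ℤ × ℤ/2ℤ`
(written multiplicatively). -/
theorem abelianization_Gamma61 :
    Nonempty (Abelianization Gamma61 ≃*
      Multiplicative ℤ × Multiplicative (ZMod 2) × Multiplicative (ZMod 2)) := by
  exact ⟨MonoidHom.toMulEquiv G61Aux.φ' G61Aux.ψ G61Aux.comp1 G61Aux.comp2⟩
end

section
/- The groups Γ₆⁰ = ⟨u, v | v u² v⁻¹ u v⁻¹ u⁻¹ v = u v² u⁻¹⟩ and Γ₆¹ = ⟨u, v, w | u² w = v w v, w = v⁻¹ u w⁻¹ u v⟩ are not isomorphic. -/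
/-- The relator `v u² v⁻¹ u v⁻¹ u⁻¹ v u v⁻² u⁻¹` (i.e. the relation
`v u² v⁻¹ u v⁻¹ u⁻¹ v = u v² u⁻¹`) in the free group on generators `u = of 0`, `v = of 1`. -/
def rel60 : FreeGroup (Fin 2) :=
  (FreeGroup.of 1) * (FreeGroup.of 0) ^ 2 * (FreeGroup.of 1)⁻¹ * (FreeGroup.of 0) *
    (FreeGroup.of 1)⁻¹ * (FreeGroup.of 0)⁻¹ * (FreeGroup.of 1) * (FreeGroup.of 0) *
    ((FreeGroup.of 1)⁻¹) ^ 2 * (FreeGroup.of 0)⁻¹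

/-- The one-relator group `Γ₆⁰ = ⟨u, v ∣ v u² v⁻¹ u v⁻¹ u⁻¹ v = u v² u⁻¹⟩`. -/
def Gamma60 := PresentedGroup ({rel60} : Set (FreeGroup (Fin 2)))

instance : Group Gamma60 := by unfold Gamma60; infer_instance

local notation "H2" => Multiplicative (ZMod 2)

lemma lift60 (f : Fin 2 → Multiplicative (ZMod 2)) :
    ∀ r ∈ ({rel60} : Set (FreeGroup (Fin 2))), FreeGroup.lift f r = 1 := by
  have key : ∀ a b : Multiplicative (ZMod 2),
      b * a ^ 2 * b⁻¹ * a * b⁻¹ * a⁻¹ * b * a * (b⁻¹) ^ 2 * a⁻¹ = 1 := by decide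
  intro r hr
  simp only [Set.mem_singleton_iff] at hr
  subst hr
  simp only [rel60, map_mul, map_pow, map_inv, FreeGroup.lift_apply_of]
  exact key _ _

lemma lift61 (f : Fin 3 → Multiplicative (ZMod 2)) :
    ∀ r ∈ ({rel61a, rel61b} : Set (FreeGroup (Fin 3))), FreeGroup.lift f r = 1 := by
  have keya : ∀ a b c : Multiplicative (ZMod 2),
      a ^ 2 * c * b⁻¹ * c⁻¹ * b⁻¹ = 1 := by decide
  have keyb : ∀ a b c : Multiplicative (ZMod 2),
      b⁻¹ * a * c⁻¹ * a * b * c⁻¹ = 1 := by decide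
  intro r hr
  rcases hr with hr | hr <;> subst hr <;>
    simp only [rel61a, rel61b, map_mul, map_pow, map_inv, FreeGroup.lift_apply_of]
  · exact keya _ _ _
  · exact keyb _ _ _

/-- The groups `Γ₆⁰` and `Γ₆¹` are not isomorphic. -/
theorem Gamma60_not_iso_Gamma61 : IsEmpty (Gamma60 ≃* Gamma61) := by
  constructor
  intro e
  -- injection (Fin 3 → H2) ↪ (Gamma61 →* H2)
  have h1 : Function.Injective
      (fun f : Fin 3 → Multiplicative (ZMod 2) => PresentedGroup.toGroup (lift61 f)) := by
    intro f g hfg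
    funext i
    have := congrArg (fun φ => φ (PresentedGroup.of i : Gamma61)) hfg
    simpa [PresentedGroup.toGroup.of] using this
  have h2 : Function.Injective
      (fun φ : Gamma61 →* Multiplicative (ZMod 2) => φ.comp e.toMonoidHom) := by
    intro φ ψ h
    ext x
    have := congrArg (fun χ => χ (e.symm x)) h
    simpa using this
  have h3 : Function.Injective
      (fun φ : Gamma60 →* Multiplicative (ZMod 2) =>
        (fun i : Fin 2 => φ (PresentedGroup.of i))) := by
    intro φ ψ h
    exact PresentedGroup.ext fun i => congrFun h i
  have hinj : Function.Injective
      (fun f : Fin 3 → Multiplicative (ZMod 2) =>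
        (fun i : Fin 2 => ((PresentedGroup.toGroup (lift61 f)).comp e.toMonoidHom)
          (PresentedGroup.of i))) := by
    intro f g h
    exact h1 (h2 (h3 h))
  have hcard := Fintype.card_le_of_injective _ hinj
  simp [Fintype.card_fun] at hcard
end

section
/- The group Γ = ⟨x, y, z, t | x y z = 1, x z y = 1, x t⁻¹ y t⁻¹ z t⁻¹ = 1⟩ contains a subgroup isomorphic to ℤ × ℤ. -/
/-- The relators `x y z`, `x z y`, `x t⁻¹ y t⁻¹ z t⁻¹` in the free group on generators
`x = of 0`, `y = of 1`, `z = of 2`, `t = of 3`. -/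
def relsHaagerup : Set (FreeGroup (Fin 4)) :=
  { (FreeGroup.of 0) * (FreeGroup.of 1) * (FreeGroup.of 2),
    (FreeGroup.of 0) * (FreeGroup.of 2) * (FreeGroup.of 1),
    (FreeGroup.of 0) * (FreeGroup.of 3)⁻¹ * (FreeGroup.of 1) * (FreeGroup.of 3)⁻¹ *
      (FreeGroup.of 2) * (FreeGroup.of 3)⁻¹ }

/-- The group `Γ = ⟨x, y, z, t ∣ x y z, x z y, x t⁻¹ y t⁻¹ z t⁻¹⟩`. -/
def GammaH := PresentedGroup relsHaagerup

instance : Group GammaH := by unfold GammaH; infer_instance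

/-- Abelianization target values: x ↦ (-1,-1,0), y ↦ (1,0,0), z ↦ (0,1,0), t ↦ (0,0,1). -/
def fH : Fin 4 → Multiplicative (ℤ × ℤ × ZMod 3) :=
  ![Multiplicative.ofAdd (-1, -1, 0), Multiplicative.ofAdd (1, 0, 0),
    Multiplicative.ofAdd (0, 1, 0), Multiplicative.ofAdd (0, 0, 1)]

lemma fH_rels : ∀ r ∈ relsHaagerup, FreeGroup.lift fH r = 1 := by
  rintro r hr
  simp only [relsHaagerup, Set.mem_insert_iff, Set.mem_singleton_iff] at hr
  rcases hr with rfl | rfl | rfl <;>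
    simp only [map_mul, map_inv, FreeGroup.lift_apply_of, fH] <;> decide

/-- The abelianization-type homomorphism out of `GammaH`. -/
def phiH : GammaH →* Multiplicative (ℤ × ℤ × ZMod 3) :=
  PresentedGroup.toGroup fH_rels

lemma rel_eq_one (r : FreeGroup (Fin 4)) (hr : r ∈ relsHaagerup) :
    (PresentedGroup.mk relsHaagerup r : GammaH) = 1 := by
  have : r ∈ Subgroup.normalClosure relsHaagerup := Subgroup.subset_normalClosure hr
  exact (QuotientGroup.eq_one_iff r).mpr this

lemma yz_comm :
    Commute (PresentedGroup.of 1 : GammaH) (PresentedGroup.of 2 : GammaH) := by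
  have h1 : (PresentedGroup.of 0 : GammaH) * PresentedGroup.of 1 * PresentedGroup.of 2 = 1 :=
    rel_eq_one _ (by simp [relsHaagerup])
  have h2 : (PresentedGroup.of 0 : GammaH) * PresentedGroup.of 2 * PresentedGroup.of 1 = 1 :=
    rel_eq_one _ (by simp [relsHaagerup])
  have := h1.trans h2.symm
  unfold Commute SemiconjBy
  apply mul_left_cancel (a := (PresentedGroup.of 0 : GammaH))
  rw [← mul_assoc, ← mul_assoc]
  exact this

/-- The homomorphism `ℤ × ℤ → Γ`, `(m, n) ↦ y^m z^n`. -/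
def psiH : Multiplicative ℤ × Multiplicative ℤ →* GammaH :=
  MonoidHom.noncommCoprod (zpowersHom GammaH (PresentedGroup.of 1))
    (zpowersHom GammaH (PresentedGroup.of 2))
    (fun m n => (yz_comm.zpow_left m.toAdd).zpow_right n.toAdd)

lemma phiH_psiH (p : Multiplicative ℤ × Multiplicative ℤ) :
    phiH (psiH p) = Multiplicative.ofAdd (p.1.toAdd, p.2.toAdd, 0) := by
  have h1 : phiH (PresentedGroup.of 1) = fH 1 := PresentedGroup.toGroup.of fH_rels
  have h2 : phiH (PresentedGroup.of 2) = fH 2 := PresentedGroup.toGroup.of fH_rels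
  have e1 : fH 1 = Multiplicative.ofAdd ((1 : ℤ), (0 : ℤ), (0 : ZMod 3)) := rfl
  have e2 : fH 2 = Multiplicative.ofAdd ((0 : ℤ), (1 : ℤ), (0 : ZMod 3)) := rfl
  obtain ⟨a, ha⟩ : ∃ a : GammaH, a = PresentedGroup.of 1 := ⟨_, rfl⟩
  obtain ⟨b, hb⟩ : ∃ b : GammaH, b = PresentedGroup.of 2 := ⟨_, rfl⟩
  have h1' : phiH a = fH 1 := by subst ha; exact h1
  have h2' : phiH b = fH 2 := by subst hb; exact h2
  have e3 : psiH p = a ^ p.1.toAdd * b ^ p.2.toAdd := by subst ha hb; rfl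
  rw [e3, map_mul, map_zpow, map_zpow, h1', h2', e1, e2]
  rw [← ofAdd_zsmul, ← ofAdd_zsmul, ← ofAdd_add]
  congr 1
  simp [Prod.ext_iff]

lemma psiH_injective : Function.Injective psiH := by
  intro a b h
  have : phiH (psiH a) = phiH (psiH b) := by rw [h]
  rw [phiH_psiH, phiH_psiH] at this
  have := Multiplicative.ofAdd.injective this
  obtain ⟨h1, h2, -⟩ : a.1.toAdd = b.1.toAdd ∧ a.2.toAdd = b.2.toAdd ∧ (0 : ZMod 3) = 0 := by
    simpa [Prod.ext_iff] using this
  exact Prod.ext (Multiplicative.toAdd.injective h1) (Multiplicative.toAdd.injective h2)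

/-- `Γ` contains a subgroup isomorphic to `ℤ × ℤ` (written multiplicatively). -/
theorem GammaH_contains_Z2 :
    ∃ K : Subgroup GammaH, Nonempty (K ≃* Multiplicative ℤ × Multiplicative ℤ) := by
  exact ⟨psiH.range, ⟨(MonoidHom.ofInjective psiH_injective).symm⟩⟩
end
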